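/- Let T=(V,E) be a leafless directed tree with a root, let λ={λ_v}_{v∈V} be a sequence of positive real numbers, let 1 ≤ q < ∞, and assume the backward shift B is bounded on L^q(T,λ). If B is hypercyclic, then for each u ∈ V there exists an increasing sequence of nonnegative integers {n_k} such that Σ_{v∈child^{n_k}(u)} λ_v^{−1/q} → ∞ as k → ∞. -/

import Mathlib

open Filter

attribute [local instance] Classical.propDecidable
open scoped ENNReal

/-- A directed tree: a locally finite directed graph on a (countably infinite)
vertex set with no directed circuits, whose underlying undirected graph is
connected, and in which every vertex has indegree at most one. -/
structure DirTree (V : Type) where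
  E : V → V → Prop
  finIn : ∀ v : V, {u : V | E u v}.Finite
  finOut : ∀ v : V, {u : V | E v u}.Finite
  noCircuit : ∀ (n : ℕ) (c : Fin (n + 1) → V), Function.Injective c →
    (∀ i : Fin n, E (c i.castSucc) (c i.succ)) → ¬ E (c (Fin.last n)) (c 0)
  conn : (SimpleGraph.fromRel E).Connected
  indeg : ∀ ⦃u w v : V⦄, E u v → E w v → u = w

namespace DirTree

variable {V : Type} (T : DirTree V)

/-- A root is a vertex of indegree zero. -/
def IsRoot (r : V) : Prop := ∀ u : V, ¬ T.E u r

/-- The set of children of a vertex. -/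
def child (u : V) : Set V := {v : V | T.E u v}

/-- A leaf is a vertex of outdegree zero. -/
def IsLeaf (u : V) : Prop := ¬ (T.child u).Nonempty

/-- The (forward) shift `(S f)(v) = f (parent v)`, with `(S f)(root) = 0`. -/
noncomputable def shift (f : V → ℂ) (v : V) : ℂ :=
  if h : ∃ u : V, T.E u v then f h.choose else 0

/-- The backward shift `(B f)(u) = ∑_{v ∈ child u} f v`. -/
noncomputable def bwd (f : V → ℂ) (u : V) : ℂ :=
  ∑' v : T.child u, f v.1

/-- The operator `(S* g)(u) = ∑_{v ∈ child u} g v · λ_v / λ_u`. -/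
noncomputable def sstar (lam : V → ℝ) (g : V → ℂ) (u : V) : ℂ :=
  ∑' v : T.child u, g v.1 * ((lam v.1 / lam u : ℝ) : ℂ)

/-- `childN n u` is the set of vertices `v` with `parentⁿ v = u`. -/
def childN (T : DirTree V) : ℕ → V → Set V
  | 0, u => {u}
  | n + 1, u => {w : V | ∃ v ∈ T.child u, w ∈ childN T n v}

/-- `γ(u,n)`, the cardinality of `childN n u`. -/
noncomputable def gam (u : V) (n : ℕ) : ℕ := (T.childN n u).ncard

/-- The `n`-th ancestor `parentⁿ u` of `u` (junk value `u` if it does not exist). -/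
noncomputable def anc (u : V) (n : ℕ) : V :=
  if h : ∃ w : V, u ∈ T.childN n w then h.choose else u

/-- A leafless directed tree has a free end if some vertex is such that all of
its descendants have outdegree one. -/
def FreeEnd : Prop :=
  ∃ w : V, ∀ n : ℕ, 0 < n → ∀ v ∈ T.childN n w, (T.child v).ncard = 1

end DirTree

/-- Membership in the weighted space `L^p(T,λ)`. -/
def MemLp' {V : Type} (lam : V → ℝ) (p : ℝ) (f : V → ℂ) : Prop :=
  Summable (fun v => ‖f v‖ ^ p * lam v)

/-- The norm of the weighted space `L^p(T,λ)`. -/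
noncomputable def pNorm {V : Type} (lam : V → ℝ) (p : ℝ) (f : V → ℂ) : ℝ :=
  (∑' v, ‖f v‖ ^ p * lam v) ^ (1 / p)

/-- Boundedness of an operator on `L^p(T,λ)`. -/
def BoundedOn {V : Type} (lam : V → ℝ) (p : ℝ) (A : (V → ℂ) → (V → ℂ)) : Prop :=
  ∃ C : ℝ, 0 ≤ C ∧ ∀ f : V → ℂ, MemLp' lam p f →
    MemLp' lam p (A f) ∧ pNorm lam p (A f) ≤ C * pNorm lam p f

/-- Hypercyclicity of an operator on `L^p(T,λ)`: some `f ∈ L^p(T,λ)` has dense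
orbit `{Aⁿ f : n ∈ ℕ}`. -/
def Hypercyclic {V : Type} (lam : V → ℝ) (p : ℝ) (A : (V → ℂ) → (V → ℂ)) : Prop :=
  ∃ f : V → ℂ, MemLp' lam p f ∧ ∀ g : V → ℂ, MemLp' lam p g → ∀ ε : ℝ, 0 < ε →
    ∃ n : ℕ, MemLp' lam p (A^[n] f - g) ∧ pNorm lam p (A^[n] f - g) < ε

-- AUX START
lemma tsum_set_finite' {V : Type} {α : Type*} [AddCommMonoid α] [TopologicalSpace α] [T2Space α]
    {s : Set V} (hs : s.Finite) (f : V → α) :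
    ∑' v : s, f v.1 = ∑ v ∈ hs.toFinset, f v := by
  rw [tsum_subtype, tsum_eq_sum (s := hs.toFinset)
    (fun b hb => Set.indicator_of_notMem (by simpa using hb) f)]
  exact Finset.sum_congr rfl fun v hv => Set.indicator_of_mem (by simpa using hv) f

namespace DirTree

variable {V : Type} (T : DirTree V)

lemma childN_finite : ∀ (n : ℕ) (u : V), (T.childN n u).Finite := by
  intro n
  induction n with
  | zero => intro u; simpa [DirTree.childN] using Set.finite_singleton u
  | succ n ih =>
      intro u
      have h : T.childN (n+1) u = ⋃ v ∈ {w | T.E u w}, T.childN n v := by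
        ext w; simp [DirTree.childN, DirTree.child]
      rw [h]
      exact Set.Finite.biUnion (T.finOut u) fun v _ => ih v

lemma childN_unique : ∀ (n : ℕ) {v₁ v₂ w : V},
    w ∈ T.childN n v₁ → w ∈ T.childN n v₂ → v₁ = v₂ := by
  intro n
  induction n with
  | zero =>
      intro v₁ v₂ w h1 h2
      simp [DirTree.childN] at h1 h2
      rw [← h1, ← h2]
  | succ n ih =>
      intro v₁ v₂ w h1 h2
      obtain ⟨x₁, hx₁, hw₁⟩ := h1
      obtain ⟨x₂, hx₂, hw₂⟩ := h2
      have hx : x₁ = x₂ := ih hw₁ hw₂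
      exact T.indeg hx₁ (by rwa [← hx] at hx₂)

lemma bwd_iterate (f : V → ℂ) : ∀ (n : ℕ) (u : V),
    T.bwd^[n] f u = ∑ v ∈ (T.childN_finite n u).toFinset, f v := by
  intro n
  induction n with
  | zero =>
      intro u
      have h : (T.childN_finite 0 u).toFinset = {u} := by
        ext w; simp [DirTree.childN]
      simp [h]
  | succ n ih =>
      intro u
      have hcf : (T.child u).Finite := T.finOut u
      rw [Function.iterate_succ_apply', DirTree.bwd,
        tsum_set_finite' hcf (T.bwd^[n] f)]
      rw [Finset.sum_congr rfl (fun v _ => ih v)]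
      have hset : (T.childN_finite (n+1) u).toFinset
          = (T.finOut u).toFinset.biUnion (fun v => (T.childN_finite n v).toFinset) := by
        ext w
        simp [DirTree.childN, DirTree.child]
      rw [hset, Finset.sum_biUnion]
      · rfl
      intro a _ b _ hab
      refine Finset.disjoint_left.2 fun w hwa hwb => hab ?_
      exact T.childN_unique n ((T.childN_finite n a).mem_toFinset.1 hwa)
        ((T.childN_finite n b).mem_toFinset.1 hwb)

end DirTree

lemma pNorm_nonneg' {V : Type} (lam : V → ℝ) (hlam : ∀ v : V, 0 < lam v) (p : ℝ)
    (f : V → ℂ) : 0 ≤ pNorm lam p f :=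
  Real.rpow_nonneg (tsum_nonneg fun v =>
    mul_nonneg (Real.rpow_nonneg (norm_nonneg _) _) (hlam v).le) _

lemma ptbound' {V : Type} (lam : V → ℝ) (hlam : ∀ v : V, 0 < lam v) (q : ℝ)
    (hqpos : 0 < q) (f : V → ℂ) (hf : MemLp' lam q f) (v : V) :
    ‖f v‖ ≤ pNorm lam q f * lam v ^ (-(1/q)) := by
  have hS0 : 0 ≤ ∑' w, ‖f w‖ ^ q * lam w :=
    tsum_nonneg fun w => mul_nonneg (Real.rpow_nonneg (norm_nonneg _) _) (hlam w).le
  have h1 : ‖f v‖ ^ q * lam v ≤ ∑' w, ‖f w‖ ^ q * lam w :=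
    Summable.le_tsum hf v fun w _ => mul_nonneg (Real.rpow_nonneg (norm_nonneg _) _) (hlam w).le
  have h2 : ‖f v‖ ^ q ≤ (∑' w, ‖f w‖ ^ q * lam w) * (lam v)⁻¹ := by
    rw [← le_div_iff₀ (hlam v)] at h1
    rwa [div_eq_mul_inv] at h1
  have h3 : ‖f v‖ ≤ ((∑' w, ‖f w‖ ^ q * lam w) * (lam v)⁻¹) ^ (1/q) := by
    calc ‖f v‖ = (‖f v‖ ^ q) ^ (1/q) := by
          rw [one_div, Real.rpow_rpow_inv (norm_nonneg _) hqpos.ne']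
    _ ≤ _ := Real.rpow_le_rpow (Real.rpow_nonneg (norm_nonneg _) _) h2 (by positivity)
  rw [Real.mul_rpow hS0 (inv_nonneg.2 (hlam v).le), Real.inv_rpow (hlam v).le,
    ← Real.rpow_neg (hlam v).le] at h3
  exact h3

/-- For a leafless rooted directed tree with bounded backward
shift `B` on `L^q(T,λ)`: if `B` is hypercyclic, then for each vertex `u` there
is a strictly increasing sequence `n_k` with
`∑_{v ∈ childⁿᵏ(u)} λ_v^{-1/q} → ∞`. -/
theorem stmt_11 {V : Type} [Countable V] [Infinite V] (T : DirTree V)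
    (hleafless : ∀ u : V, ¬ T.IsLeaf u) (hroot : ∃ r : V, T.IsRoot r)
    (lam : V → ℝ) (hlam : ∀ v : V, 0 < lam v) (q : ℝ) (hq : 1 ≤ q)
    (hb : BoundedOn lam q T.bwd)
    (hhc : Hypercyclic lam q T.bwd) :
    ∀ u : V, ∃ nk : ℕ → ℕ, StrictMono nk ∧
      Tendsto (fun k : ℕ => ∑' v : T.childN (nk k) u, (lam v.1) ^ (-(1 / q)))
        atTop atTop := by
  intro u
  have hq0 : (0:ℝ) < q := lt_of_lt_of_le one_pos hq
  obtain ⟨f, hf, hdense⟩ := hhc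
  set Cf := pNorm lam q f with hCfdef
  have hCf0 : 0 ≤ Cf := pNorm_nonneg' lam hlam q f
  let Sn : ℕ → ℝ := fun n => ∑' v : T.childN n u, (lam v.1) ^ (-(1 / q))
  have hSnF : ∀ n, Sn n = ∑ v ∈ (T.childN_finite n u).toFinset, lam v ^ (-(1/q)) := by
    intro n
    show (∑' v : T.childN n u, (lam v.1) ^ (-(1 / q)))
      = ∑ v ∈ (T.childN_finite n u).toFinset, lam v ^ (-(1/q))
    exact tsum_set_finite' (T.childN_finite n u) (fun v => lam v ^ (-(1/q)))
  have hSn0 : ∀ n, 0 ≤ Sn n := fun n => by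
    rw [hSnF]
    exact Finset.sum_nonneg fun v _ => Real.rpow_nonneg (hlam v).le _
  have key : ∀ M : ℝ, ∃ n, M < Sn n := by
    intro M
    set δ := lam u ^ (-(1/q)) with hδdef
    have hδ0 : 0 < δ := Real.rpow_pos_of_pos (hlam u) _
    set M0 := max M 0 with hM0def
    have hM0a : M ≤ M0 := le_max_left _ _
    have hM0b : (0:ℝ) ≤ M0 := le_max_right _ _
    set c := δ + (M0 + 1) * (Cf + 1) with hcdef
    have hc0 : 0 ≤ c := by nlinarith
    set g : V → ℂ := fun v => if v = u then (c:ℂ) else 0 with hgdef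
    have hg : MemLp' lam q g := by
      apply summable_of_ne_finset_zero (s := ({u} : Finset V))
      intro b hb
      have hb' : b ≠ u := by simpa using hb
      simp [hgdef, hb', Real.zero_rpow hq0.ne']
    obtain ⟨n, hmem, hnorm⟩ := hdense g hg 1 one_pos
    refine ⟨n, ?_⟩
    have hpt := ptbound' lam hlam q hq0 _ hmem u
    have hpn0 : 0 ≤ pNorm lam q (T.bwd^[n] f - g) := pNorm_nonneg' lam hlam q _
    have hub : ‖(T.bwd^[n] f - g) u‖ < δ := by
      have h2 : pNorm lam q (T.bwd^[n] f - g) * lam u ^ (-(1/q)) < 1 * δ := by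
        rw [hδdef]
        exact mul_lt_mul_of_pos_right hnorm hδ0
      rw [one_mul] at h2
      exact lt_of_le_of_lt hpt h2
    have heq : (T.bwd^[n] f - g) u = T.bwd^[n] f u - (c:ℂ) := by
      simp [hgdef]
    rw [heq] at hub
    have hcnorm : ‖(c:ℂ)‖ = c := by
      rw [Complex.norm_real, Real.norm_eq_abs, abs_of_nonneg hc0]
    have h1 : c - δ ≤ ‖T.bwd^[n] f u‖ := by
      have h3 : ‖(c:ℂ)‖ - ‖T.bwd^[n] f u‖ ≤ ‖(c:ℂ) - T.bwd^[n] f u‖ :=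
        norm_sub_norm_le _ _
      rw [norm_sub_rev, hcnorm] at h3
      linarith
    have h2 : ‖T.bwd^[n] f u‖ ≤ Cf * Sn n := by
      rw [T.bwd_iterate f n u, hSnF]
      calc ‖∑ v ∈ (T.childN_finite n u).toFinset, f v‖
          ≤ ∑ v ∈ (T.childN_finite n u).toFinset, ‖f v‖ := norm_sum_le _ _
        _ ≤ ∑ v ∈ (T.childN_finite n u).toFinset, Cf * lam v ^ (-(1/q)) :=
            Finset.sum_le_sum fun v _ => ptbound' lam hlam q hq0 f hf v
        _ = Cf * ∑ v ∈ (T.childN_finite n u).toFinset, lam v ^ (-(1/q)) :=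
            (Finset.mul_sum _ _ _).symm
    by_contra hcon
    push_neg at hcon
    have h4 : Cf * Sn n ≤ Cf * M0 :=
      mul_le_mul_of_nonneg_left (hcon.trans hM0a) hCf0
    nlinarith [hSn0 n]
  have key2 : ∀ M : ℝ, ∀ N : ℕ, ∃ n, N < n ∧ M < Sn n := by
    intro M N
    obtain ⟨n, hn⟩ := key (|M| + ∑ j ∈ Finset.range (N+1), Sn j)
    refine ⟨n, ?_, ?_⟩
    · by_contra hc
      push_neg at hc
      have h5 : Sn n ≤ ∑ j ∈ Finset.range (N+1), Sn j :=
        Finset.single_le_sum (fun j _ => hSn0 j) (Finset.mem_range.2 (Nat.lt_succ_of_le hc))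
      have := abs_nonneg M
      linarith
    · have := le_abs_self M
      have h6 : 0 ≤ ∑ j ∈ Finset.range (N+1), Sn j :=
        Finset.sum_nonneg fun j _ => hSn0 j
      linarith
  choose F hF1 hF2 using key2
  let nk : ℕ → ℕ := fun k => Nat.rec (F 0 0) (fun k ih => F ((k:ℝ)+1) ih) k
  have hsucc : ∀ k, nk (k+1) = F ((k:ℝ)+1) (nk k) := fun k => rfl
  refine ⟨nk, strictMono_nat_of_lt_succ fun k => by rw [hsucc]; exact hF1 _ _, ?_⟩
  have hbound : ∀ k : ℕ, (k:ℝ) ≤ Sn (nk k) := by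
    intro k
    cases k with
    | zero =>
        have h0 : (0:ℝ) ≤ Sn (nk 0) := (hF2 0 0).le
        push_cast
        exact h0
    | succ m =>
        have := hF2 ((m:ℝ)+1) (nk m)
        rw [← hsucc] at this
        push_cast
        linarith
  exact tendsto_atTop_mono hbound tendsto_natCast_atTop_atTop
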